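/- For every p ≥ 2 there exists a constant c_p > 0, depending only on p, with the following property. Let (Ω,ℙ) be a probability space, (U,𝒰,μ) a σ-finite measure space, T : U × Ω → Ω a measurable map, and for measurable F : Ω → ℝ write (D_u F)(ω) = F(T(u,ω)) − F(ω). Then for every measurable F : Ω → ℝ with 𝔼|F|^p < ∞ one has 𝔼 ∫_U ( |F(T(u,·))|^{p/2} − |F|^{p/2} )² dμ(u) ≤ c_p ( 𝔼 ∫_U |D_u F|^p dμ(u) + 𝔼 ( ∫_U (D_u F)² dμ(u) )^{p/2} ) + (1/2) 𝔼 |F|^p, where both sides are interpreted as values in [0,∞]. -/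

import Mathlib

open MeasureTheory
open scoped ENNReal NNReal

/-- Tangent-line inequality for `rpow`, derived from Bernoulli's inequality. -/
lemma stmt3_rpow_tangent {s x y : ℝ} (hs : 1 ≤ s) (hy : 0 ≤ y) (hxy : y ≤ x) :
    x ^ s - y ^ s ≤ s * x ^ (s - 1) * (x - y) := by
  have hx : 0 ≤ x := hy.trans hxy
  rcases eq_or_lt_of_le hx with h0 | hx0
  · obtain rfl : x = 0 := h0.symm
    obtain rfl : y = 0 := le_antisymm hxy hy
    simp
  · have h1 : (-1 : ℝ) ≤ y / x - 1 := by
      have : 0 ≤ y / x := div_nonneg hy hx0.le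
      linarith
    have hb := one_add_mul_self_le_rpow_one_add h1 hs
    rw [add_sub_cancel] at hb
    have hxpow : (0:ℝ) < x ^ s := Real.rpow_pos_of_pos hx0 s
    have hdiv : (y / x) ^ s * x ^ s = y ^ s := by
      rw [Real.div_rpow hy hx0.le]
      field_simp
    have hmul := mul_le_mul_of_nonneg_right hb hxpow.le
    rw [hdiv] at hmul
    have hxs1 : x ^ s = x ^ (s - 1) * x := by
      rw [← Real.rpow_add_one hx0.ne' (s - 1)]
      ring_nf
    have hexp : (y / x - 1) * x ^ s = (y - x) * x ^ (s - 1) := by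
      rw [hxs1]
      field_simp
    nlinarith [hmul, hexp]

/-- Pointwise real inequality:
`(|a|^{p/2} - |b|^{p/2})² ≤ (p/2)² 2^{p-2} (|a-b|^p + |b|^{p-2}(a-b)²)`. -/
lemma stmt3_key1 {p : ℝ} (hp : 2 ≤ p) (a b : ℝ) :
    (|a| ^ (p / 2) - |b| ^ (p / 2)) ^ 2 ≤
      (p / 2) ^ 2 * (2:ℝ) ^ (p - 2) *
        (|a - b| ^ p + |b| ^ (p - 2) * (a - b) ^ 2) := by
  set s := p / 2 with hs_def
  have hs : 1 ≤ s := by rw [hs_def]; linarith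
  set x := |a| with hx_def
  set y := |b| with hy_def
  set t := |a - b| with ht_def
  have hx : 0 ≤ x := abs_nonneg a
  have hy : 0 ≤ y := abs_nonneg b
  have ht : 0 ≤ t := abs_nonneg (a - b)
  have habs : |x - y| ≤ t := abs_abs_sub_abs_le_abs_sub a b
  have hs1 : 0 ≤ s - 1 := by linarith
  -- Step A : |x^s - y^s| ≤ s * (y+t)^(s-1) * t
  have hyt : 0 ≤ y + t := by linarith
  have stepA : |x ^ s - y ^ s| ≤ s * (y + t) ^ (s - 1) * t := by
    rcases le_total y x with hyx | hxy
    · have h1 : x ^ s - y ^ s ≤ s * x ^ (s - 1) * (x - y) :=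
        stmt3_rpow_tangent hs hy hyx
      have hxyt : x ≤ y + t := by
        have : x - y ≤ |x - y| := le_abs_self _
        linarith
      have h2 : x ^ (s - 1) ≤ (y + t) ^ (s - 1) :=
        Real.rpow_le_rpow hx hxyt hs1
      have h3 : x - y ≤ t := by
        have : x - y ≤ |x - y| := le_abs_self _
        linarith
      have h0 : 0 ≤ x ^ s - y ^ s := by
        have := Real.rpow_le_rpow hy hyx (by linarith : (0:ℝ) ≤ s)
        linarith
      rw [abs_of_nonneg h0]
      calc x ^ s - y ^ s ≤ s * x ^ (s - 1) * (x - y) := h1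
        _ ≤ s * (y + t) ^ (s - 1) * t := by
            have hsx : 0 ≤ s * x ^ (s - 1) :=
              mul_nonneg (by linarith) (Real.rpow_nonneg hx _)
            have hs0 : (0:ℝ) ≤ s := by linarith
            have hxy0 : 0 ≤ x - y := by linarith
            calc s * x ^ (s - 1) * (x - y) ≤ s * (y + t) ^ (s - 1) * (x - y) := by
                  apply mul_le_mul_of_nonneg_right _ hxy0
                  exact mul_le_mul_of_nonneg_left h2 hs0
              _ ≤ s * (y + t) ^ (s - 1) * t := by
                  apply mul_le_mul_of_nonneg_left h3
                  exact mul_nonneg hs0 (Real.rpow_nonneg hyt _)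
    · have h1 : y ^ s - x ^ s ≤ s * y ^ (s - 1) * (y - x) :=
        stmt3_rpow_tangent hs hx hxy
      have h2 : y ^ (s - 1) ≤ (y + t) ^ (s - 1) :=
        Real.rpow_le_rpow hy (by linarith) hs1
      have h3 : y - x ≤ t := by
        have : -(x - y) ≤ |x - y| := neg_le_abs _
        linarith
      have h0 : 0 ≤ y ^ s - x ^ s := by
        have := Real.rpow_le_rpow hx hxy (by linarith : (0:ℝ) ≤ s)
        linarith
      rw [abs_sub_comm, abs_of_nonneg h0]
      calc y ^ s - x ^ s ≤ s * y ^ (s - 1) * (y - x) := h1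
        _ ≤ s * (y + t) ^ (s - 1) * t := by
            have hs0 : (0:ℝ) ≤ s := by linarith
            have hxy0 : 0 ≤ y - x := by linarith
            calc s * y ^ (s - 1) * (y - x) ≤ s * (y + t) ^ (s - 1) * (y - x) := by
                  apply mul_le_mul_of_nonneg_right _ hxy0
                  exact mul_le_mul_of_nonneg_left h2 hs0
              _ ≤ s * (y + t) ^ (s - 1) * t := by
                  apply mul_le_mul_of_nonneg_left h3
                  exact mul_nonneg hs0 (Real.rpow_nonneg hyt _)
  -- Step B : square it
  have hsq : (x ^ s - y ^ s) ^ 2 ≤ s ^ 2 * (y + t) ^ (p - 2) * t ^ 2 := by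
    have h1 : (x ^ s - y ^ s) ^ 2 ≤ (s * (y + t) ^ (s - 1) * t) ^ 2 := by
      rw [← sq_abs (x ^ s - y ^ s)]
      apply pow_le_pow_left₀ (abs_nonneg _) stepA
    have h2 : ((y + t) ^ (s - 1)) ^ 2 = (y + t) ^ (p - 2) := by
      rw [sq, ← Real.rpow_add_of_nonneg hyt hs1 hs1]
      congr 1
      rw [hs_def]; ring
    calc (x ^ s - y ^ s) ^ 2 ≤ (s * (y + t) ^ (s - 1) * t) ^ 2 := h1
      _ = s ^ 2 * ((y + t) ^ (s - 1)) ^ 2 * t ^ 2 := by ring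
      _ = s ^ 2 * (y + t) ^ (p - 2) * t ^ 2 := by rw [h2]
  -- Step C : (y+t)^(p-2) ≤ 2^(p-2) * (y^(p-2) + t^(p-2))
  have hp2 : (0:ℝ) ≤ p - 2 := by linarith
  have stepC : (y + t) ^ (p - 2) ≤ (2:ℝ) ^ (p - 2) * (y ^ (p - 2) + t ^ (p - 2)) := by
    have hmax : y + t ≤ 2 * max y t := by
      rcases le_total y t with h | h
      · have := max_eq_right h; rw [this]; linarith
      · have := max_eq_left h; rw [this]; linarith
    have h1 : (y + t) ^ (p - 2) ≤ (2 * max y t) ^ (p - 2) :=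
      Real.rpow_le_rpow hyt hmax hp2
    have h2 : (2 * max y t) ^ (p - 2) = (2:ℝ) ^ (p - 2) * (max y t) ^ (p - 2) :=
      Real.mul_rpow (by norm_num) (le_max_of_le_left hy)
    have h3 : (max y t) ^ (p - 2) ≤ y ^ (p - 2) + t ^ (p - 2) := by
      rcases le_total y t with h | h
      · rw [max_eq_right h]
        have := Real.rpow_nonneg hy (p - 2)
        linarith
      · rw [max_eq_left h]
        have := Real.rpow_nonneg ht (p - 2)
        linarith
    calc (y + t) ^ (p - 2) ≤ (2 * max y t) ^ (p - 2) := h1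
      _ = (2:ℝ) ^ (p - 2) * (max y t) ^ (p - 2) := h2
      _ ≤ (2:ℝ) ^ (p - 2) * (y ^ (p - 2) + t ^ (p - 2)) := by
          apply mul_le_mul_of_nonneg_left h3
          exact Real.rpow_nonneg (by norm_num) _
  -- Step D : t^(p-2) * t^2 = t^p
  have stepD : t ^ (p - 2) * t ^ (2:ℕ) = t ^ p := by
    rw [← Real.rpow_natCast t 2, ← Real.rpow_add_of_nonneg ht hp2 (by norm_num)]
    norm_num
  -- combine
  have ht2 : (a - b) ^ 2 = t ^ (2:ℕ) := (sq_abs (a - b)).symm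
  have hs2 : 0 ≤ s ^ 2 := sq_nonneg s
  have h2p : (0:ℝ) ≤ (2:ℝ) ^ (p - 2) := Real.rpow_nonneg (by norm_num) _
  have ht2' : (0:ℝ) ≤ t ^ (2:ℕ) := sq_nonneg t
  calc (x ^ s - y ^ s) ^ 2 ≤ s ^ 2 * (y + t) ^ (p - 2) * t ^ 2 := hsq
    _ ≤ s ^ 2 * ((2:ℝ) ^ (p - 2) * (y ^ (p - 2) + t ^ (p - 2))) * t ^ 2 := by
        apply mul_le_mul_of_nonneg_right _ ht2'
        exact mul_le_mul_of_nonneg_left stepC hs2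
    _ = s ^ 2 * (2:ℝ) ^ (p - 2) * (t ^ (p - 2) * t ^ (2:ℕ) + y ^ (p - 2) * t ^ (2:ℕ)) := by
        ring
    _ = s ^ 2 * (2:ℝ) ^ (p - 2) * (t ^ p + y ^ (p - 2) * (a - b) ^ 2) := by
        rw [stepD, ht2]

/-- Splitting inequality in `ℝ≥0∞`:
`x^{p-2} Y ≤ δ x^p + δ^{1-p/2} Y^{p/2}`. -/
lemma stmt3_key2 {p : ℝ} (hp : 2 ≤ p) {δ : ℝ} (hδ : 0 < δ) {x : ℝ} (hx : 0 ≤ x)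
    (Y : ℝ≥0∞) :
    ENNReal.ofReal (x ^ (p - 2)) * Y ≤
      ENNReal.ofReal (δ * x ^ p) +
        ENNReal.ofReal (δ ^ (1 - p / 2)) * Y ^ (p / 2) := by
  have hp2 : (0:ℝ) < p / 2 := by linarith
  have hp2' : (0:ℝ) ≤ p - 2 := by linarith
  rcases eq_top_or_lt_top Y with hY | hY
  · have htop : ENNReal.ofReal (δ ^ (1 - p / 2)) * Y ^ (p / 2) = ⊤ := by
      rw [hY, ENNReal.top_rpow_of_pos hp2]
      exact ENNReal.mul_top (ENNReal.ofReal_pos.mpr (Real.rpow_pos_of_pos hδ _)).ne'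
    rw [htop]
    simp
  · by_cases hc : Y ≤ ENNReal.ofReal (δ * x ^ (2:ℕ))
    · calc ENNReal.ofReal (x ^ (p - 2)) * Y
          ≤ ENNReal.ofReal (x ^ (p - 2)) * ENNReal.ofReal (δ * x ^ (2:ℕ)) :=
            mul_le_mul_right hc _
        _ = ENNReal.ofReal (x ^ (p - 2) * (δ * x ^ (2:ℕ))) :=
            (ENNReal.ofReal_mul (Real.rpow_nonneg hx _)).symm
        _ = ENNReal.ofReal (δ * x ^ p) := by
            congr 1
            have : x ^ (p - 2) * x ^ (2:ℕ) = x ^ p := by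
              rw [← Real.rpow_natCast x 2,
                ← Real.rpow_add_of_nonneg hx hp2' (by norm_num)]
              norm_num
            nlinarith [this]
        _ ≤ _ := le_self_add
    · push_neg at hc
      have hY0 : Y ≠ 0 := by
        intro h
        rw [h] at hc
        exact (not_le_of_gt hc) zero_le
      set yr := Y.toReal with hyr_def
      have hyr0 : 0 < yr := ENNReal.toReal_pos hY0 hY.ne
      have hxle : δ * x ^ (2:ℕ) ≤ yr := by
        have := hc.le
        rcases le_or_gt (δ * x ^ (2:ℕ)) 0 with h | h
        · exact h.trans hyr0.le
        · have := (ENNReal.ofReal_le_iff_le_toReal hY.ne).mp this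
          exact this
      have hx2 : x ^ (2:ℕ) ≤ yr / δ := by
        rw [le_div_iff₀ hδ]; nlinarith
      have hxb : x ^ (p - 2) ≤ δ ^ (1 - p / 2) * yr ^ ((p - 2) / 2) := by
        have h1 : (x ^ (2:ℕ) : ℝ) ^ ((p - 2) / 2) ≤ (yr / δ) ^ ((p - 2) / 2) :=
          Real.rpow_le_rpow (sq_nonneg x) hx2 (by linarith)
        have h2 : (x ^ (2:ℕ) : ℝ) ^ ((p - 2) / 2) = x ^ (p - 2) := by
          rw [← Real.rpow_natCast x 2, ← Real.rpow_mul hx]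
          congr 1
          ring
        have h3 : (yr / δ) ^ ((p - 2) / 2) =
            δ ^ (1 - p / 2) * yr ^ ((p - 2) / 2) := by
          rw [Real.div_rpow hyr0.le hδ.le, div_eq_mul_inv,
            ← Real.rpow_neg hδ.le, mul_comm]
          congr 2
          ring
        rw [← h3, ← h2]
        exact h1
      have hofr : ENNReal.ofReal (yr ^ ((p - 2) / 2)) = Y ^ ((p - 2) / 2) := by
        rw [← ENNReal.ofReal_rpow_of_pos hyr0, ENNReal.ofReal_toReal hY.ne]
      calc ENNReal.ofReal (x ^ (p - 2)) * Y
          ≤ ENNReal.ofReal (δ ^ (1 - p / 2) * yr ^ ((p - 2) / 2)) * Y := by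
            apply mul_le_mul_left
            exact ENNReal.ofReal_le_ofReal hxb
        _ = ENNReal.ofReal (δ ^ (1 - p / 2)) * (Y ^ ((p - 2) / 2) * Y) := by
            rw [ENNReal.ofReal_mul (Real.rpow_nonneg hδ.le _), hofr, mul_assoc]
        _ = ENNReal.ofReal (δ ^ (1 - p / 2)) * Y ^ (p / 2) := by
            congr 1
            nth_rewrite 2 [← ENNReal.rpow_one Y]
            rw [← ENNReal.rpow_add _ _ hY0 hY.ne]
            congr 1
            ring
        _ ≤ _ := le_add_self

set_option maxHeartbeats 1000000 in
/-- Lemma 3.2 of the paper. For every `p ≥ 2` there is `c_p > 0`,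
depending only on `p`, such that for any probability space `(Ω, P)`, any σ-finite
measure space `(U, μ)`, any measurable `T : U × Ω → Ω` (with the difference operator
`(D_u F)(ω) = F(T(u,ω)) − F(ω)`), and any measurable `F : Ω → ℝ` with `𝔼|F|^p < ∞`,
one has
`𝔼 ∫_U (|F ∘ T_u|^{p/2} − |F|^{p/2})² dμ
  ≤ c_p (𝔼 ∫_U |D_u F|^p dμ + 𝔼 (∫_U (D_u F)² dμ)^{p/2}) + (1/2) 𝔼 |F|^p`,
with both sides interpreted in `[0,∞]`. -/
theorem stmt3 (p : ℝ) (hp : 2 ≤ p) :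
    ∃ c : ℝ, 0 < c ∧
      ∀ (Ω U : Type) [MeasurableSpace Ω] [MeasurableSpace U]
        (P : Measure Ω) (μ : Measure U),
        IsProbabilityMeasure P → SigmaFinite μ →
        ∀ T : U × Ω → Ω, Measurable T →
        ∀ F : Ω → ℝ, Measurable F →
        (∫⁻ ω, ENNReal.ofReal (|F ω| ^ p) ∂P) < ⊤ →
        (∫⁻ ω, (∫⁻ u, ENNReal.ofReal
              ((|F (T (u, ω))| ^ (p / 2) - |F ω| ^ (p / 2)) ^ 2) ∂μ) ∂P)
          ≤ ENNReal.ofReal c *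
              ((∫⁻ ω, ∫⁻ u, ENNReal.ofReal (|F (T (u, ω)) - F ω| ^ p) ∂μ ∂P)
                + ∫⁻ ω, (∫⁻ u, ENNReal.ofReal ((F (T (u, ω)) - F ω) ^ 2) ∂μ) ^ (p / 2) ∂P)
            + (1 / 2) * ∫⁻ ω, ENNReal.ofReal (|F ω| ^ p) ∂P := by
  have hs2 : (0:ℝ) < p / 2 := by linarith
  have h2p : (0:ℝ) < (2:ℝ) ^ (p - 2) := Real.rpow_pos_of_pos (by norm_num) _
  have hK : (0:ℝ) < (p / 2) ^ 2 * (2:ℝ) ^ (p - 2) := mul_pos (pow_pos hs2 2) h2p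
  have hδ : (0:ℝ) < 1 / (2 * ((p / 2) ^ 2 * (2:ℝ) ^ (p - 2))) :=
    by positivity
  have hδ' : (0:ℝ) < (1 / (2 * ((p / 2) ^ 2 * (2:ℝ) ^ (p - 2)))) ^ (1 - p / 2) :=
    Real.rpow_pos_of_pos hδ _
  have hc : (0:ℝ) < (p / 2) ^ 2 * (2:ℝ) ^ (p - 2)
      + ((p / 2) ^ 2 * (2:ℝ) ^ (p - 2)) *
        (1 / (2 * ((p / 2) ^ 2 * (2:ℝ) ^ (p - 2)))) ^ (1 - p / 2) :=
    add_pos hK (mul_pos hK hδ')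
  have hKc : (p / 2) ^ 2 * (2:ℝ) ^ (p - 2) ≤ (p / 2) ^ 2 * (2:ℝ) ^ (p - 2)
      + ((p / 2) ^ 2 * (2:ℝ) ^ (p - 2)) *
        (1 / (2 * ((p / 2) ^ 2 * (2:ℝ) ^ (p - 2)))) ^ (1 - p / 2) :=
    le_add_of_nonneg_right (mul_pos hK hδ').le
  have hKδc : ((p / 2) ^ 2 * (2:ℝ) ^ (p - 2)) *
        (1 / (2 * ((p / 2) ^ 2 * (2:ℝ) ^ (p - 2)))) ^ (1 - p / 2)
      ≤ (p / 2) ^ 2 * (2:ℝ) ^ (p - 2)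
      + ((p / 2) ^ 2 * (2:ℝ) ^ (p - 2)) *
        (1 / (2 * ((p / 2) ^ 2 * (2:ℝ) ^ (p - 2)))) ^ (1 - p / 2) :=
    le_add_of_nonneg_left hK.le
  have hKδhalf : ((p / 2) ^ 2 * (2:ℝ) ^ (p - 2)) *
      (1 / (2 * ((p / 2) ^ 2 * (2:ℝ) ^ (p - 2)))) = 1 / 2 := by
    field_simp
  set K := (p / 2) ^ 2 * (2:ℝ) ^ (p - 2) with hK_def
  set δ := 1 / (2 * K) with hδ_def
  set c := K + K * δ ^ (1 - p / 2) with hc_def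
  refine ⟨c, hc, ?_⟩
  intro Ω U mΩ mU P μ hP hσ T hT F hF hFp
  -- measurability
  have hFT : Measurable fun q : Ω × U => F (T (q.2, q.1)) :=
    hF.comp (hT.comp (measurable_snd.prodMk measurable_fst))
  have hD : Measurable fun q : Ω × U => F (T (q.2, q.1)) - F q.1 :=
    hFT.sub (hF.comp measurable_fst)
  have hBq : Measurable fun q : Ω × U =>
      ENNReal.ofReal (|F (T (q.2, q.1)) - F q.1| ^ p) :=
    ENNReal.measurable_ofReal.comp (hD.abs.pow measurable_const)
  have hWq : Measurable fun q : Ω × U =>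
      ENNReal.ofReal ((F (T (q.2, q.1)) - F q.1) ^ 2) :=
    ENNReal.measurable_ofReal.comp (hD.pow_const 2)
  have hI1m : Measurable fun ω =>
      ∫⁻ u, ENNReal.ofReal (|F (T (u, ω)) - F ω| ^ p) ∂μ :=
    hBq.lintegral_prod_right'
  have hYm : Measurable fun ω =>
      ∫⁻ u, ENNReal.ofReal ((F (T (u, ω)) - F ω) ^ 2) ∂μ :=
    hWq.lintegral_prod_right'
  -- pointwise (in ω) bound
  have step : ∀ ω,
      (∫⁻ u, ENNReal.ofReal
          ((|F (T (u, ω))| ^ (p / 2) - |F ω| ^ (p / 2)) ^ 2) ∂μ)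
        ≤ ENNReal.ofReal K *
            (∫⁻ u, ENNReal.ofReal (|F (T (u, ω)) - F ω| ^ p) ∂μ)
          + (ENNReal.ofReal (1 / 2 * |F ω| ^ p)
            + ENNReal.ofReal (K * δ ^ (1 - p / 2)) *
                (∫⁻ u, ENNReal.ofReal ((F (T (u, ω)) - F ω) ^ 2) ∂μ) ^ (p / 2)) := by
    intro ω
    have hXnn : (0:ℝ) ≤ |F ω| := abs_nonneg _
    have hBmu : Measurable fun u => ENNReal.ofReal (|F (T (u, ω)) - F ω| ^ p) :=
      hBq.comp (measurable_prodMk_left (x := ω))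
    have hWmu : Measurable fun u => ENNReal.ofReal ((F (T (u, ω)) - F ω) ^ 2) :=
      hWq.comp (measurable_prodMk_left (x := ω))
    calc (∫⁻ u, ENNReal.ofReal
          ((|F (T (u, ω))| ^ (p / 2) - |F ω| ^ (p / 2)) ^ 2) ∂μ)
        ≤ ∫⁻ u, ENNReal.ofReal K *
            (ENNReal.ofReal (|F (T (u, ω)) - F ω| ^ p)
              + ENNReal.ofReal (|F ω| ^ (p - 2)) *
                  ENNReal.ofReal ((F (T (u, ω)) - F ω) ^ 2)) ∂μ := by
          apply lintegral_mono
          intro u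
          have h := stmt3_key1 hp (F (T (u, ω))) (F ω)
          calc ENNReal.ofReal ((|F (T (u, ω))| ^ (p / 2) - |F ω| ^ (p / 2)) ^ 2)
              ≤ ENNReal.ofReal ((p / 2) ^ 2 * (2:ℝ) ^ (p - 2) *
                  (|F (T (u, ω)) - F ω| ^ p
                    + |F ω| ^ (p - 2) * (F (T (u, ω)) - F ω) ^ 2)) :=
                ENNReal.ofReal_le_ofReal h
            _ = _ := by
                rw [ENNReal.ofReal_mul hK.le,
                  ENNReal.ofReal_add (Real.rpow_nonneg (abs_nonneg _) _)
                    (mul_nonneg (Real.rpow_nonneg hXnn _) (sq_nonneg _)),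
                  ENNReal.ofReal_mul (Real.rpow_nonneg hXnn _)]
      _ = ENNReal.ofReal K *
            ((∫⁻ u, ENNReal.ofReal (|F (T (u, ω)) - F ω| ^ p) ∂μ)
              + ENNReal.ofReal (|F ω| ^ (p - 2)) *
                  (∫⁻ u, ENNReal.ofReal ((F (T (u, ω)) - F ω) ^ 2) ∂μ)) := by
          rw [lintegral_const_mul _ (by exact hBmu.add (hWmu.const_mul _) : Measurable fun u =>
              ENNReal.ofReal (|F (T (u, ω)) - F ω| ^ p)
                + ENNReal.ofReal (|F ω| ^ (p - 2)) * ENNReal.ofReal ((F (T (u, ω)) - F ω) ^ 2)),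
            lintegral_add_left hBmu, lintegral_const_mul _ hWmu]
      _ ≤ _ := by
          rw [mul_add]
          apply add_le_add le_rfl
          have h2 := stmt3_key2 hp hδ hXnn
            (∫⁻ u, ENNReal.ofReal ((F (T (u, ω)) - F ω) ^ 2) ∂μ)
          calc ENNReal.ofReal K * (ENNReal.ofReal (|F ω| ^ (p - 2)) *
                (∫⁻ u, ENNReal.ofReal ((F (T (u, ω)) - F ω) ^ 2) ∂μ))
              ≤ ENNReal.ofReal K * (ENNReal.ofReal (δ * |F ω| ^ p)
                  + ENNReal.ofReal (δ ^ (1 - p / 2)) *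
                      (∫⁻ u, ENNReal.ofReal ((F (T (u, ω)) - F ω) ^ 2) ∂μ) ^ (p / 2)) :=
                mul_le_mul_right h2 _
            _ = _ := by
                rw [mul_add, ← ENNReal.ofReal_mul hK.le, ← mul_assoc K δ, hKδhalf,
                  ← mul_assoc, ← ENNReal.ofReal_mul hK.le]
  -- integrate the pointwise bound over ω
  have h12 : ENNReal.ofReal (1 / 2 : ℝ) = 1 / 2 := by
    rw [ENNReal.ofReal_div_of_pos (by norm_num)]
    norm_num
  calc (∫⁻ ω, (∫⁻ u, ENNReal.ofReal
          ((|F (T (u, ω))| ^ (p / 2) - |F ω| ^ (p / 2)) ^ 2) ∂μ) ∂P)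
      ≤ ∫⁻ ω, (ENNReal.ofReal K *
            (∫⁻ u, ENNReal.ofReal (|F (T (u, ω)) - F ω| ^ p) ∂μ)
          + (ENNReal.ofReal (1 / 2 * |F ω| ^ p)
            + ENNReal.ofReal (K * δ ^ (1 - p / 2)) *
                (∫⁻ u, ENNReal.ofReal ((F (T (u, ω)) - F ω) ^ 2) ∂μ) ^ (p / 2))) ∂P :=
        lintegral_mono step
    _ = ENNReal.ofReal K *
          (∫⁻ ω, ∫⁻ u, ENNReal.ofReal (|F (T (u, ω)) - F ω| ^ p) ∂μ ∂P)
        + (ENNReal.ofReal (1 / 2) *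
            (∫⁻ ω, ENNReal.ofReal (|F ω| ^ p) ∂P)
          + ENNReal.ofReal (K * δ ^ (1 - p / 2)) *
              (∫⁻ ω, (∫⁻ u, ENNReal.ofReal ((F (T (u, ω)) - F ω) ^ 2) ∂μ) ^ (p / 2) ∂P)) := by
        rw [lintegral_add_left (hI1m.const_mul _),
          lintegral_const_mul _ hI1m]
        congr 1
        have hEm : Measurable fun ω => ENNReal.ofReal (1 / 2 * |F ω| ^ p) :=
          ENNReal.measurable_ofReal.comp ((hF.abs.pow measurable_const).const_mul _)
        rw [lintegral_add_left hEm,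
          lintegral_const_mul _ (hYm.pow measurable_const)]
        congr 1
        simp_rw [ENNReal.ofReal_mul (by norm_num : (0:ℝ) ≤ 1/2)]
        have hEf : Measurable fun ω => ENNReal.ofReal (|F ω| ^ p) :=
          ENNReal.measurable_ofReal.comp (hF.abs.pow measurable_const)
        rw [lintegral_const_mul _ hEf]
    _ ≤ ENNReal.ofReal c *
          (∫⁻ ω, ∫⁻ u, ENNReal.ofReal (|F (T (u, ω)) - F ω| ^ p) ∂μ ∂P)
        + ((1 / 2) * (∫⁻ ω, ENNReal.ofReal (|F ω| ^ p) ∂P)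
          + ENNReal.ofReal c *
              (∫⁻ ω, (∫⁻ u, ENNReal.ofReal ((F (T (u, ω)) - F ω) ^ 2) ∂μ) ^ (p / 2) ∂P)) := by
        refine add_le_add (mul_le_mul_left (ENNReal.ofReal_le_ofReal hKc) _)
          (add_le_add (mul_le_mul_left (le_of_eq h12) _)
            (mul_le_mul_left (ENNReal.ofReal_le_ofReal hKδc) _))
    _ = _ := by ring
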